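/- Let R be a 2-torsion free σ-prime ring and d a nonzero derivation of R. If d is centralizing on R, i.e., [d(x), x] ∈ Z(R) for all x ∈ R, then R is commutative. -/
import Mathlib


theorem stmt9 (R : Type*) [Ring R]
  (σ : R → R)
  (hσadd : ∀ x y : R, σ (x + y) = σ x + σ y)
  (hσmul : ∀ x y : R, σ (x * y) = σ y * σ x)
  (hσinv : ∀ x : R, σ (σ x) = x)
  (htor : ∀ x : R, x + x = 0 → x = 0)
  (hsp : ∀ a b : R, (∀ r : R, a * r * b = 0) → (∀ r : R, a * r * σ b = 0) → a = 0 ∨ b = 0)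
  (d : R → R)
  (hdadd : ∀ x y : R, d (x + y) = d x + d y)
  (hdmul : ∀ x y : R, d (x * y) = d x * y + x * d y)
  (hdnz : ∃ x : R, d x ≠ 0)
  (hcent : ∀ x r : R, (d x * x - x * d x) * r = r * (d x * x - x * d x)) :
    ∀ x y : R, x * y = y * x := by
  -- basic facts about σ
  have hσ0 : σ 0 = 0 := by
    have h := hσadd 0 0
    rw [add_zero] at h
    exact (left_eq_add.mp h)
  have hσneg : ∀ a : R, σ (-a) = -σ a := by
    intro a
    have h := hσadd a (-a)
    rw [add_neg_cancel, hσ0] at h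
    exact eq_neg_of_add_eq_zero_right h.symm
  have hσsub : ∀ a b : R, σ (a - b) = σ a - σ b := by
    intro a b
    rw [sub_eq_add_neg, hσadd, hσneg, ← sub_eq_add_neg]
  -- semiprimeness
  have hsemi : ∀ a : R, (∀ r : R, a * r * a = 0) → a = 0 := by
    intro a ha
    by_contra hne
    have h1 : ∀ r : R, a * r * σ a = 0 := by
      intro r
      have hu1 : ∀ u : R, a * u * (a * r * σ a) = 0 := by
        intro u
        calc a * u * (a * r * σ a) = (a * u * a) * (r * σ a) := by noncomm_ring
          _ = 0 := by rw [ha u, zero_mul]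
      have hu2 : ∀ u : R, a * u * σ (a * r * σ a) = 0 := by
        intro u
        have hs : σ (a * r * σ a) = a * (σ r * σ a) := by
          rw [hσmul, hσmul, hσinv]
        rw [hs]
        calc a * u * (a * (σ r * σ a)) = (a * u * a) * (σ r * σ a) := by noncomm_ring
          _ = 0 := by rw [ha u, zero_mul]
      rcases hsp a (a * r * σ a) hu1 hu2 with h | h
      · exact absurd h hne
      · exact h
    rcases hsp a a ha h1 with h | h <;> exact hne h
  -- swap lemma
  have hswap : ∀ a b : R, (∀ r : R, a * r * b = 0) → ∀ r : R, b * r * a = 0 := by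
    intro a b h r
    apply hsemi
    intro s
    calc b * r * a * s * (b * r * a) = b * r * ((a * s * b) * (r * a)) := by noncomm_ring
      _ = 0 := by rw [h s, zero_mul, mul_zero]
  -- 4-torsion
  have htor4 : ∀ a : R, a + a + (a + a) = 0 → a = 0 :=
    fun a h => htor a (htor (a + a) h)
  -- centrality of the linearized expression
  have hBc : ∀ x y r : R, ((d x * y - y * d x) + (d y * x - x * d y)) * r
      = r * ((d x * y - y * d x) + (d y * x - x * d y)) := by
    intro x y r
    have h := hcent (x + y) r
    rw [hdadd x y] at h
    have e : (d x + d y) * (x + y) - (x + y) * (d x + d y)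
        = (d x * x - x * d x) + (d y * y - y * d y)
          + ((d x * y - y * d x) + (d y * x - x * d y)) := by noncomm_ring
    rw [e] at h
    have h2 := hcent x r
    have h3 := hcent y r
    have key : ((d x * y - y * d x) + (d y * x - x * d y)) * r
        - r * ((d x * y - y * d x) + (d y * x - x * d y))
        = (((d x * x - x * d x) + (d y * y - y * d y)
            + ((d x * y - y * d x) + (d y * x - x * d y))) * r
           - r * ((d x * x - x * d x) + (d y * y - y * d y)
            + ((d x * y - y * d x) + (d y * x - x * d y))))
          - ((d x * x - x * d x) * r - r * (d x * x - x * d x))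
          - ((d y * y - y * d y) * r - r * (d y * y - y * d y)) := by noncomm_ring
    rw [sub_eq_zero_of_eq h, sub_eq_zero_of_eq h2, sub_eq_zero_of_eq h3] at key
    rw [sub_zero, sub_zero] at key
    exact sub_eq_zero.mp key
  -- (d x * x - x * d x) * x is central
  have hfx : ∀ x r : R, (d x * x - x * d x) * x * r = r * ((d x * x - x * d x) * x) := by
    intro x r
    have h := hBc x (x * x) r
    rw [hdmul x x] at h
    have hcx := hcent x x
    have hG : x * (d x * x - x * d x) - (d x * x - x * d x) * x = 0 :=
      sub_eq_zero_of_eq hcx.symm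
    have key : ((d x * x - x * d x) * x * r - r * ((d x * x - x * d x) * x))
          + ((d x * x - x * d x) * x * r - r * ((d x * x - x * d x) * x))
          + (((d x * x - x * d x) * x * r - r * ((d x * x - x * d x) * x))
            + ((d x * x - x * d x) * x * r - r * ((d x * x - x * d x) * x)))
        = (((d x * (x * x) - x * x * d x) + ((d x * x + x * d x) * x - x * (d x * x + x * d x))) * r
            - r * ((d x * (x * x) - x * x * d x) + ((d x * x + x * d x) * x - x * (d x * x + x * d x))))
          - ((x * (d x * x - x * d x) - (d x * x - x * d x) * x) * r
            - r * (x * (d x * x - x * d x) - (d x * x - x * d x) * x))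
          - ((x * (d x * x - x * d x) - (d x * x - x * d x) * x) * r
            - r * (x * (d x * x - x * d x) - (d x * x - x * d x) * x)) := by noncomm_ring
    rw [sub_eq_zero_of_eq h, hG] at key
    simp only [zero_mul, mul_zero, sub_zero, sub_self, zero_sub, neg_zero] at key
    exact sub_eq_zero.mp (htor4 _ key)
  -- f(x) annihilates commutators of x
  have hfcomm : ∀ x r : R, (d x * x - x * d x) * (x * r - r * x) = 0 := by
    intro x r
    have h1 := hfx x r
    have h2 := hcent x r
    have key : (d x * x - x * d x) * (x * r - r * x)
        = ((d x * x - x * d x) * x * r - r * ((d x * x - x * d x) * x))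
          - (((d x * x - x * d x) * r - r * (d x * x - x * d x)) * x) := by noncomm_ring
    rw [key, sub_eq_zero_of_eq h1, sub_eq_zero_of_eq h2]
    simp
  -- f(x)^2 = 0
  have hf2 : ∀ x : R, (d x * x - x * d x) * (d x * x - x * d x) = 0 := by
    intro x
    have h := hfcomm x (d x)
    have key : (d x * x - x * d x) * (d x * x - x * d x)
        = -((d x * x - x * d x) * (x * d x - d x * x)) := by noncomm_ring
    rw [key, h, neg_zero]
  -- d is commuting
  have hf0 : ∀ x : R, d x * x = x * d x := by
    intro x
    have h : d x * x - x * d x = 0 := by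
      apply hsemi
      intro r
      calc (d x * x - x * d x) * r * (d x * x - x * d x)
          = r * ((d x * x - x * d x) * (d x * x - x * d x)) := by
            rw [hcent x r, mul_assoc]
        _ = 0 := by rw [hf2 x, mul_zero]
    exact sub_eq_zero.mp h
  -- linearization of commuting
  have hc1 : ∀ x y : R, d x * y + d y * x = y * d x + x * d y := by
    intro x y
    have h := hf0 (x + y)
    rw [hdadd x y] at h
    have hx := hf0 x
    have hy := hf0 y
    have key : (d x * y + d y * x) - (y * d x + x * d y)
        = ((d x + d y) * (x + y) - (x + y) * (d x + d y))
          - (d x * x - x * d x) - (d y * y - y * d y) := by noncomm_ring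
    rw [sub_eq_zero_of_eq h, sub_eq_zero_of_eq hx, sub_eq_zero_of_eq hy] at key
    rw [sub_zero, sub_zero] at key
    exact sub_eq_zero.mp key
  -- d x annihilates commutators of x
  have hd8 : ∀ x y : R, d x * (y * x - x * y) = 0 := by
    intro x y
    have hA := hc1 x (x * y)
    rw [hdmul x y] at hA
    have hB := hc1 x y
    have hx := hf0 x
    have key : d x * (y * x - x * y)
        = ((d x * (x * y) + (d x * y + x * d y) * x) - (x * y * d x + x * (d x * y + x * d y)))
          - x * ((d x * y + d y * x) - (y * d x + x * d y))
          - ((d x * x - x * d x) * y + (d x * x - x * d x) * y) := by noncomm_ring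
    rw [key, sub_eq_zero_of_eq hA, sub_eq_zero_of_eq hB, sub_eq_zero_of_eq hx]
    simp
  have hd9 : ∀ x y z : R, d x * y * (z * x - x * z) = 0 := by
    intro x y z
    have h1 := hd8 x (y * z)
    have h2 := hd8 x y
    calc d x * y * (z * x - x * z)
        = d x * (y * z * x - x * (y * z)) - d x * (y * x - x * y) * z := by noncomm_ring
      _ = 0 := by rw [h1, h2]; simp
  have hd10 : ∀ x z r : R, (z * x - x * z) * r * d x = 0 :=
    fun x z => hswap (d x) (z * x - x * z) (fun r => hd9 x r z)
  have hd11 : ∀ x y z r : R, d x * r * (z * y - y * z) + d y * r * (z * x - x * z) = 0 := by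
    intro x y z r
    have h := hd9 (x + y) r z
    rw [hdadd x y] at h
    have h1 := hd9 x r z
    have h2 := hd9 y r z
    have key : d x * r * (z * y - y * z) + d y * r * (z * x - x * z)
        = (d x + d y) * r * (z * (x + y) - (x + y) * z)
          - d x * r * (z * x - x * z) - d y * r * (z * y - y * z) := by noncomm_ring
    rw [h, h1, h2] at key
    rw [sub_zero, sub_zero] at key
    exact key
  have hd12 : ∀ x y z r : R, d x * r * (z * y - y * z) = 0 := by
    intro x y z r
    apply hsemi
    intro s
    have h' : d x * r * (z * y - y * z) = -(d y * r * (z * x - x * z)) :=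
      eq_neg_of_add_eq_zero_left (hd11 x y z r)
    nth_rewrite 2 [h']
    have key : d x * r * (z * y - y * z) * s * (-(d y * r * (z * x - x * z)))
        = -(d x * r * ((z * y - y * z) * s * d y * (r * (z * x - x * z)))) := by noncomm_ring
    rw [key, hd10 y z s]
    simp
  -- conclusion
  intro x y
  obtain ⟨x0, hx0⟩ := hdnz
  have h1 : ∀ r : R, d x0 * r * (x * y - y * x) = 0 := fun r => hd12 x0 y x r
  have h2 : ∀ r : R, d x0 * r * σ (x * y - y * x) = 0 := by
    intro r
    rw [hσsub, hσmul, hσmul]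
    exact hd12 x0 (σ x) (σ y) r
  rcases hsp (d x0) (x * y - y * x) h1 h2 with h | h
  · exact absurd h hx0
  · exact sub_eq_zero.mp h
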